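/- arXiv:2205.10562 — 3 statements merged into one kernel-verified Lean document; each statement's English description precedes it below -/
import Mathlib

section
/- For ρ_GHZ as above and α_i = Σ_A σ_i Σ_A, β_j = Σ_B σ_j Σ_B, γ_k = Σ_C σ_k Σ_C with Σ_A = diag(l,1), Σ_B = diag(m,1), Σ_C = diag(n,1), the coefficients D_{ijk} = Tr[ρ_GHZ (α_i⊗β_j⊗γ_k)] satisfy D_{111} = p l m n, D_{122} = D_{212} = D_{221} = −p l m n, D_{333} = ((l²−1)(m²n²+1))/4 + ((l²+1)(m²n²−1))/4 · p, and all other D_{ijk} = 0. -/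
open Matrix Kronecker ComplexOrder

noncomputable def pauli : Fin 3 → Matrix (Fin 2) (Fin 2) ℂ
  | 0 => !![0, 1; 1, 0]
  | 1 => !![0, -Complex.I; Complex.I, 0]
  | 2 => !![1, 0; 0, -1]

noncomputable def ghzVec : Fin 2 × Fin 2 × Fin 2 → ℂ := fun x =>
  if x = ((0, 0, 0) : Fin 2 × Fin 2 × Fin 2) ∨ x = ((1, 1, 1) : Fin 2 × Fin 2 × Fin 2)
  then ((Real.sqrt 2)⁻¹ : ℝ) else 0

/-- The projector |GHZ⟩⟨GHZ|. -/
noncomputable def ghzProj : Matrix (Fin 2 × Fin 2 × Fin 2) (Fin 2 × Fin 2 × Fin 2) ℂ :=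
  fun x y => ghzVec x * (starRingEnd ℂ) (ghzVec y)

/-- The 4×4 matrix diag(1,0,0,1). -/
noncomputable def Itilde : Matrix (Fin 2 × Fin 2) (Fin 2 × Fin 2) ℂ :=
  Matrix.diagonal (fun x => if x = ((0, 0) : Fin 2 × Fin 2) ∨ x = ((1, 1) : Fin 2 × Fin 2)
    then (1 : ℂ) else 0)

/-- The noisy GHZ state ρ_GHZ = p|GHZ⟩⟨GHZ| + ((1-p)/4) I₂ ⊗ diag(1,0,0,1). -/
noncomputable def rhoGHZ (p : ℝ) : Matrix (Fin 2 × Fin 2 × Fin 2) (Fin 2 × Fin 2 × Fin 2) ℂ :=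
  (p : ℂ) • ghzProj + (((1 - p) / 4 : ℝ) : ℂ) • ((1 : Matrix (Fin 2) (Fin 2) ℂ) ⊗ₖ Itilde)

/-- Filtered Pauli operators: `filt l i = diag(l,1) · σ_i · diag(l,1)`. -/
noncomputable def filt (l : ℝ) (i : Fin 3) : Matrix (Fin 2) (Fin 2) ℂ :=
  !![(l : ℂ), 0; 0, 1] * pauli i * !![(l : ℂ), 0; 0, 1]


lemma trace_rho (p : ℝ) (A B C : Matrix (Fin 2) (Fin 2) ℂ) :
    (rhoGHZ p * (A ⊗ₖ (B ⊗ₖ C))).trace =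
    ((p:ℂ)/2) * (A 0 0 * B 0 0 * C 0 0 + A 0 1 * B 0 1 * C 0 1
      + A 1 0 * B 1 0 * C 1 0 + A 1 1 * B 1 1 * C 1 1)
    + (((1-p)/4 : ℝ) : ℂ) * ((A 0 0 + A 1 1) * (B 0 0 * C 0 0 + B 1 1 * C 1 1)) := by
  simp [rhoGHZ, Matrix.trace, Matrix.mul_apply, ghzProj, ghzVec, Itilde,
    Fintype.sum_prod_type, Fin.sum_univ_succ, Matrix.one_apply, Matrix.diagonal,
    Prod.ext_iff, Fin.ext_iff, -Fin.val_eq_zero_iff]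
  have h2 : ((Real.sqrt 2 : ℝ) : ℂ)⁻¹ ^ 2 = 1/2 := by
    rw [← Complex.ofReal_inv, ← Complex.ofReal_pow]
    norm_num [inv_pow, Real.sq_sqrt]
  ring_nf
  rw [h2]
  ring

lemma filt_0 (l : ℝ) : filt l 0 = !![0, (l:ℂ); (l:ℂ), 0] := by
  ext i j; fin_cases i <;> fin_cases j <;>
    simp [filt, pauli, Matrix.mul_apply, Fin.sum_univ_succ]

lemma filt_1 (l : ℝ) : filt l 1 = !![0, -(l:ℂ)*Complex.I; (l:ℂ)*Complex.I, 0] := by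
  ext i j; fin_cases i <;> fin_cases j <;>
    simp [filt, pauli, Matrix.mul_apply, Fin.sum_univ_succ] <;> ring

lemma filt_2 (l : ℝ) : filt l 2 = !![(l:ℂ)^2, 0; 0, -1] := by
  ext i j; fin_cases i <;> fin_cases j <;>
    simp [filt, pauli, Matrix.mul_apply, Fin.sum_univ_succ] <;> ring

set_option maxHeartbeats 1000000 in
/-- The filtered correlation coefficients D_{ijk} = Tr[ρ_GHZ (α_i⊗β_j⊗γ_k)]:
D_{111} = plmn, D_{122} = D_{212} = D_{221} = -plmn,
D_{333} = ((l²-1)(m²n²+1))/4 + ((l²+1)(m²n²-1))/4·p, all others vanish. -/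
theorem ghz_filtered_correlations (p l m n : ℝ) (hp0 : 0 ≤ p) (hp1 : p ≤ 1)
    (hl : 0 ≤ l) (hm : 0 ≤ m) (hn : 0 ≤ n) :
    ((rhoGHZ p * (filt l 0 ⊗ₖ (filt m 0 ⊗ₖ filt n 0))).trace = ((p * l * m * n : ℝ) : ℂ)) ∧
    ((rhoGHZ p * (filt l 0 ⊗ₖ (filt m 1 ⊗ₖ filt n 1))).trace = ((-(p * l * m * n) : ℝ) : ℂ)) ∧
    ((rhoGHZ p * (filt l 1 ⊗ₖ (filt m 0 ⊗ₖ filt n 1))).trace = ((-(p * l * m * n) : ℝ) : ℂ)) ∧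
    ((rhoGHZ p * (filt l 1 ⊗ₖ (filt m 1 ⊗ₖ filt n 0))).trace = ((-(p * l * m * n) : ℝ) : ℂ)) ∧
    ((rhoGHZ p * (filt l 2 ⊗ₖ (filt m 2 ⊗ₖ filt n 2))).trace
      = (((l ^ 2 - 1) * (m ^ 2 * n ^ 2 + 1)) / 4
          + ((l ^ 2 + 1) * (m ^ 2 * n ^ 2 - 1)) / 4 * p : ℝ)) ∧
    ∀ i j k : Fin 3,
      (i, j, k) ≠ ((0, 0, 0) : Fin 3 × Fin 3 × Fin 3) →
      (i, j, k) ≠ ((0, 1, 1) : Fin 3 × Fin 3 × Fin 3) →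
      (i, j, k) ≠ ((1, 0, 1) : Fin 3 × Fin 3 × Fin 3) →
      (i, j, k) ≠ ((1, 1, 0) : Fin 3 × Fin 3 × Fin 3) →
      (i, j, k) ≠ ((2, 2, 2) : Fin 3 × Fin 3 × Fin 3) →
      (rhoGHZ p * (filt l i ⊗ₖ (filt m j ⊗ₖ filt n k))).trace = 0 := by
  refine ⟨?_, ?_, ?_, ?_, ?_, ?_⟩
  · rw [trace_rho]; simp [filt_0, filt_1, filt_2]; push_cast; ring
  · rw [trace_rho]; simp [filt_0, filt_1, filt_2]; ring_nf
    rw [Complex.I_sq]; push_cast; ring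
  · rw [trace_rho]; simp [filt_0, filt_1, filt_2]; ring_nf
    rw [Complex.I_sq]; push_cast; ring
  · rw [trace_rho]; simp [filt_0, filt_1, filt_2]; ring_nf
    rw [Complex.I_sq]; push_cast; ring
  · rw [trace_rho]; simp [filt_0, filt_1, filt_2]; push_cast; ring
  · intro i j k h1 h2 h3 h4 h5
    fin_cases i <;> fin_cases j <;> fin_cases k <;>
      first
        | exact absurd rfl h1
        | exact absurd rfl h2
        | exact absurd rfl h3
        | exact absurd rfl h4
        | exact absurd rfl h5
        | (rw [trace_rho]; simp [filt_0, filt_1, filt_2]; try ring)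
end

section
/- For √2/2 < p ≤ 1 (p real), the largest singular value λ_max of the 3×9 correlation matrix C of ρ_GHZ (with entries C_{111}=p, C_{122}=C_{212}=C_{221}=−p, others zero) satisfies 2√2 λ_max = 4p > 2, i.e., the Mermin inequality bound is violated; conversely, 2√2 λ_max ≤ 2 when 0 ≤ p ≤ 1/2. -/
open Matrix

noncomputable def CGHZ (p : ℝ) : Matrix (Fin 3) (Fin 3 × Fin 3) ℝ := fun j ik =>
  if j = 0 ∧ ik = ((0, 0) : Fin 3 × Fin 3) then p
  else if j = 1 ∧ ik = ((0, 1) : Fin 3 × Fin 3) then -p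
  else if j = 0 ∧ ik = ((1, 1) : Fin 3 × Fin 3) then -p
  else if j = 1 ∧ ik = ((1, 0) : Fin 3 × Fin 3) then -p
  else 0

lemma CGHZ_gram (p : ℝ) :
    CGHZ p * (CGHZ p)ᵀ = Matrix.diagonal ![2*p^2, 2*p^2, 0] := by
  ext i j
  fin_cases i <;> fin_cases j <;>
    simp [CGHZ, Matrix.mul_apply, Fintype.sum_prod_type, Fin.sum_univ_succ,
      Matrix.transpose_apply, Matrix.diagonal] <;> ring

lemma lam_sq (p : ℝ) (lam : ℝ)
    (heig : ∃ v : Fin 3 → ℝ, v ≠ 0 ∧ (CGHZ p * (CGHZ p)ᵀ) *ᵥ v = lam ^ 2 • v)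
    (hmax : ∀ μ : ℝ, (∃ v : Fin 3 → ℝ, v ≠ 0 ∧ (CGHZ p * (CGHZ p)ᵀ) *ᵥ v = μ • v) →
      μ ≤ lam ^ 2) : lam ^ 2 = 2 * p ^ 2 := by
  have h1 : 2 * p ^ 2 ≤ lam ^ 2 := by
    refine hmax _ ⟨fun i => if i = 0 then 1 else 0, ?_, ?_⟩
    · intro h
      have := congrFun h 0
      simp at this
    · rw [CGHZ_gram]
      funext i
      fin_cases i <;> simp [Matrix.mulVec, Matrix.diagonal, dotProduct,
        Fin.sum_univ_succ]
  obtain ⟨v, hv, hev⟩ := heig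
  rw [CGHZ_gram] at hev
  have hi : ∃ i, v i ≠ 0 := by
    by_contra h
    push_neg at h
    exact hv (funext h)
  obtain ⟨i, hvi⟩ := hi
  have := congrFun hev i
  simp [Matrix.mulVec_diagonal] at this
  have hle : lam ^ 2 ≤ 2 * p ^ 2 := by
    have hval : (![2*p^2, 2*p^2, 0] : Fin 3 → ℝ) i = lam ^ 2 :=
      this.resolve_right hvi
    fin_cases i <;> simp at hval <;> [exact le_of_eq hval.symm; exact le_of_eq hval.symm;
      (rw [← hval]; positivity)]
  linarith

/-- If λ is the largest singular value of the GHZ correlation matrix (i.e. λ ≥ 0 and λ² is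
the largest eigenvalue of C Cᵀ), then for √2/2 < p ≤ 1 one has 2√2·λ = 4p > 2, while for
0 ≤ p ≤ 1/2 one has 2√2·λ ≤ 2. -/
theorem ghz_mermin_violation (p : ℝ) (lam : ℝ) (hlam0 : 0 ≤ lam)
    (heig : ∃ v : Fin 3 → ℝ, v ≠ 0 ∧ (CGHZ p * (CGHZ p)ᵀ) *ᵥ v = lam ^ 2 • v)
    (hmax : ∀ μ : ℝ, (∃ v : Fin 3 → ℝ, v ≠ 0 ∧ (CGHZ p * (CGHZ p)ᵀ) *ᵥ v = μ • v) →
      μ ≤ lam ^ 2) :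
    (Real.sqrt 2 / 2 < p → p ≤ 1 →
      2 * Real.sqrt 2 * lam = 4 * p ∧ 2 * Real.sqrt 2 * lam > 2) ∧
    (0 ≤ p → p ≤ 1 / 2 → 2 * Real.sqrt 2 * lam ≤ 2) := by
  have hsq : lam ^ 2 = 2 * p ^ 2 := lam_sq p lam heig hmax
  have h2 : (0:ℝ) < Real.sqrt 2 := by positivity
  have hs2 : Real.sqrt 2 * Real.sqrt 2 = 2 := Real.mul_self_sqrt (by norm_num)
  have hlamval : 0 ≤ p → lam = Real.sqrt 2 * p := by
    intro hp
    have h1 : lam ^ 2 = (Real.sqrt 2 * p) ^ 2 := by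
      rw [hsq, mul_pow, Real.sq_sqrt (by norm_num : (0:ℝ) ≤ 2)]
    have h2' : 0 ≤ Real.sqrt 2 * p := by positivity
    nlinarith [sq_nonneg (lam - Real.sqrt 2 * p), sq_nonneg (lam + Real.sqrt 2 * p)]
  constructor
  · intro hp1 hp2
    have hp0 : 0 ≤ p := le_trans (by positivity) hp1.le
    have hl := hlamval hp0
    constructor
    · rw [hl]; nlinarith
    · have : 2 * Real.sqrt 2 * lam = 4 * p := by rw [hl]; nlinarith
      rw [this]
      nlinarith [Real.sq_sqrt (by norm_num : (0:ℝ) ≤ 2), Real.sqrt_nonneg 2]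
  · intro hp0 hp2
    have hl := hlamval hp0
    rw [hl]
    nlinarith
end

section
/- Let ρ_G = |GHZ⟩⟨GHZ| with |GHZ⟩ = (|000⟩+|111⟩)/√2, and let E_AD(σ) = E_0 σ E_0† + E_1 σ E_1† with E_0 = diag(1, √(1−γ)), E_1 = !![0, √γ; 0, 0], 0 < γ < 1, applied to each qubit. Then the resulting state ρ_G^{AD} has correlation coefficients C_{111} = (1−γ)^{3/2}, C_{122} = C_{212} = C_{221} = −(1−γ)^{3/2}, C_{333} = γ(3−6γ+4γ²), and all other C_{ijk} = 0. -/
open Matrix Kronecker ComplexOrder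

/-- Kraus operators of the amplitude damping channel with damping rate γ. -/
noncomputable def kraus (γ : ℝ) : Fin 2 → Matrix (Fin 2) (Fin 2) ℂ
  | 0 => !![1, 0; 0, (Real.sqrt (1 - γ) : ℝ)]
  | 1 => !![0, (Real.sqrt γ : ℝ); 0, 0]

/-- The qubit-wise amplitude damped GHZ state
ρ_G^{AD} = Σ_{a,b,c} (E_a⊗E_b⊗E_c) ρ_G (E_a⊗E_b⊗E_c)†. -/
noncomputable def rhoAD (γ : ℝ) : Matrix (Fin 2 × Fin 2 × Fin 2) (Fin 2 × Fin 2 × Fin 2) ℂ :=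
  ∑ a : Fin 2, ∑ b : Fin 2, ∑ c : Fin 2,
    (kraus γ a ⊗ₖ (kraus γ b ⊗ₖ kraus γ c)) * ghzProj *
      (kraus γ a ⊗ₖ (kraus γ b ⊗ₖ kraus γ c))ᴴ

lemma sandwich (A : Matrix (Fin 2 × Fin 2 × Fin 2) (Fin 2 × Fin 2 × Fin 2) ℂ)
    (x y : Fin 2 × Fin 2 × Fin 2) :
    (A * ghzProj * Aᴴ) x y = (2:ℂ)⁻¹ *
      ((A x 0 + A x 1) * (starRingEnd ℂ) (A y 0 + A y 1)) := by
  have h2 : (((Real.sqrt 2 : ℝ)) : ℂ)⁻¹ * (((Real.sqrt 2 : ℝ)) : ℂ)⁻¹ = (2:ℂ)⁻¹ := by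
    rw [← mul_inv, ← Complex.ofReal_mul, Real.mul_self_sqrt (by norm_num : (0:ℝ) ≤ 2)]
    norm_num
  simp only [Matrix.mul_apply, Matrix.conjTranspose_apply, ghzProj, ghzVec,
    Fintype.sum_prod_type, Fin.sum_univ_two, Prod.mk.injEq, _root_.map_mul, map_add,
    Complex.conj_ofReal, _root_.map_zero, star_zero, star_one, Complex.ofReal_inv]
  norm_num [Fin.ext_iff]
  ring_nf
  linear_combination ((A x 0 + A x 1) * ((starRingEnd ℂ) (A y 0) + (starRingEnd ℂ) (A y 1))) * h2

noncomputable def dv (γ : ℝ) (x : Fin 2 × Fin 2 × Fin 2) : ℂ :=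
  if x = 0 then 1 else if x = 1 then ((Real.sqrt (1-γ) : ℝ) : ℂ)^3 else 0

noncomputable def gv (γ : ℝ) (u : Fin 2) : ℂ :=
  if u = 1 then ((Real.sqrt (1-γ) : ℝ) : ℂ)^2 else ((Real.sqrt γ : ℝ) : ℂ)^2

noncomputable def wv (γ : ℝ) (x : Fin 2 × Fin 2 × Fin 2) : ℂ :=
  gv γ x.1 * gv γ x.2.1 * gv γ x.2.2 - (if x = 1 then ((Real.sqrt (1-γ) : ℝ) : ℂ)^6 else 0)

noncomputable def Mm (γ : ℝ) : Matrix (Fin 2 × Fin 2 × Fin 2) (Fin 2 × Fin 2 × Fin 2) ℂ :=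
  fun x y => (2:ℂ)⁻¹ * ((dv γ x * dv γ y) + if x = y then wv γ x else 0)

noncomputable def Fv (γ : ℝ) (a b c : Fin 2) (x : Fin 2 × Fin 2 × Fin 2) : ℂ :=
  kraus γ a x.1 0 * kraus γ b x.2.1 0 * kraus γ c x.2.2 0
  + kraus γ a x.1 1 * kraus γ b x.2.1 1 * kraus γ c x.2.2 1

lemma rhoAD_apply (γ : ℝ) (x y : Fin 2 × Fin 2 × Fin 2) :
    rhoAD γ x y = (2:ℂ)⁻¹ * ∑ a : Fin 2, ∑ b : Fin 2, ∑ c : Fin 2,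
      Fv γ a b c x * (starRingEnd ℂ) (Fv γ a b c y) := by
  simp only [rhoAD, Matrix.sum_apply, Matrix.add_apply, sandwich, Fv, Matrix.kroneckerMap_apply,
    Prod.fst_zero, Prod.snd_zero, Prod.fst_one, Prod.snd_one, Fin.sum_univ_two]
  ring

set_option maxHeartbeats 3200000 in
lemma rhoAD_eq (γ : ℝ) : rhoAD γ = Mm γ := by
  funext x y
  obtain ⟨a, b, c⟩ := x
  obtain ⟨d, e, f⟩ := y
  rw [rhoAD_apply]
  fin_cases a <;> fin_cases b <;> fin_cases c <;> fin_cases d <;> fin_cases e <;> fin_cases f <;>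
    simp only [Fin.mk_zero, Fin.mk_one, Fin.isValue, Fv, kraus, Mm, dv, gv, wv, Fin.sum_univ_two,
      Matrix.cons_val', Matrix.cons_val_zero, Matrix.cons_val_one, Matrix.head_cons,
      Matrix.empty_val', Matrix.cons_val_fin_one, Matrix.head_fin_const,
      _root_.map_mul, map_add, _root_.map_one, _root_.map_zero, Complex.conj_ofReal,
      mul_zero, zero_mul, mul_one, one_mul, add_zero, zero_add,
      Prod.mk.injEq, if_true, if_false] <;>
    norm_num <;> ring

set_option maxHeartbeats 1600000 in
lemma trace_Mm (γ : ℝ) (P : Matrix (Fin 2 × Fin 2 × Fin 2) (Fin 2 × Fin 2 × Fin 2) ℂ) :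
    (Mm γ * P).trace = (2:ℂ)⁻¹ *
      (P 0 0 + ((Real.sqrt (1-γ) : ℝ) : ℂ)^3 * (P 0 1 + P 1 0)
        + ((Real.sqrt (1-γ) : ℝ) : ℂ)^6 * P 1 1
        + ∑ x : Fin 2 × Fin 2 × Fin 2, wv γ x * P x x) := by
  simp only [Matrix.trace, Matrix.diag, Matrix.mul_apply, Mm, dv,
    Fintype.sum_prod_type, Fin.sum_univ_two, Prod.mk.injEq, Prod.mk_zero_zero,
    Prod.mk_one_one]
  norm_num [Prod.ext_iff, Fin.ext_iff]
  ring

/-- Correlation coefficients of the amplitude damped GHZ state: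
C_{111} = (1-γ)^{3/2}, C_{122} = C_{212} = C_{221} = -(1-γ)^{3/2},
C_{333} = γ(3-6γ+4γ²), all others vanish. -/
theorem ad_ghz_correlations (γ : ℝ) (h0 : 0 < γ) (h1 : γ < 1) :
    ((rhoAD γ * (pauli 0 ⊗ₖ (pauli 0 ⊗ₖ pauli 0))).trace
      = (((1 - γ) ^ ((3 : ℝ) / 2) : ℝ) : ℂ)) ∧
    ((rhoAD γ * (pauli 0 ⊗ₖ (pauli 1 ⊗ₖ pauli 1))).trace
      = ((-((1 - γ) ^ ((3 : ℝ) / 2)) : ℝ) : ℂ)) ∧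
    ((rhoAD γ * (pauli 1 ⊗ₖ (pauli 0 ⊗ₖ pauli 1))).trace
      = ((-((1 - γ) ^ ((3 : ℝ) / 2)) : ℝ) : ℂ)) ∧
    ((rhoAD γ * (pauli 1 ⊗ₖ (pauli 1 ⊗ₖ pauli 0))).trace
      = ((-((1 - γ) ^ ((3 : ℝ) / 2)) : ℝ) : ℂ)) ∧
    ((rhoAD γ * (pauli 2 ⊗ₖ (pauli 2 ⊗ₖ pauli 2))).trace
      = ((γ * (3 - 6 * γ + 4 * γ ^ 2) : ℝ) : ℂ)) ∧
    ∀ i j k : Fin 3,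
      (i, j, k) ≠ ((0, 0, 0) : Fin 3 × Fin 3 × Fin 3) →
      (i, j, k) ≠ ((0, 1, 1) : Fin 3 × Fin 3 × Fin 3) →
      (i, j, k) ≠ ((1, 0, 1) : Fin 3 × Fin 3 × Fin 3) →
      (i, j, k) ≠ ((1, 1, 0) : Fin 3 × Fin 3 × Fin 3) →
      (i, j, k) ≠ ((2, 2, 2) : Fin 3 × Fin 3 × Fin 3) →
      (rhoAD γ * (pauli i ⊗ₖ (pauli j ⊗ₖ pauli k))).trace = 0 := by
  have h32 : ((1 - γ) ^ ((3 : ℝ) / 2) : ℝ) = (Real.sqrt (1 - γ))^3 := by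
    rw [Real.sqrt_eq_rpow, ← Real.rpow_natCast ((1-γ) ^ ((1:ℝ)/2)) 3,
      ← Real.rpow_mul (by linarith)]
    norm_num
  have hS : ((Real.sqrt (1-γ) : ℝ) : ℂ)^2 = ((1-γ : ℝ) : ℂ) := by
    norm_cast; exact Real.sq_sqrt (by linarith)
  have hT : ((Real.sqrt γ : ℝ) : ℂ)^2 = ((γ : ℝ) : ℂ) := by
    norm_cast; exact Real.sq_sqrt h0.le
  refine ⟨?_, ?_, ?_, ?_, ?_, ?_⟩
  · rw [rhoAD_eq, trace_Mm, h32]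
    simp only [pauli, wv, gv, Matrix.kroneckerMap_apply, Fintype.sum_prod_type, Fin.sum_univ_two,
      Prod.fst_zero, Prod.snd_zero, Prod.fst_one, Prod.snd_one, Prod.mk.injEq,
      Matrix.cons_val', Matrix.cons_val_zero, Matrix.cons_val_one, Matrix.head_cons,
      Matrix.empty_val', Matrix.cons_val_fin_one, Matrix.head_fin_const]
    norm_num
    push_cast
    ring
  · rw [rhoAD_eq, trace_Mm]
    push_cast [h32]
    simp only [pauli, wv, gv, Matrix.kroneckerMap_apply, Fintype.sum_prod_type, Fin.sum_univ_two,
      Prod.fst_zero, Prod.snd_zero, Prod.fst_one, Prod.snd_one, Prod.mk.injEq,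
      Matrix.cons_val', Matrix.cons_val_zero, Matrix.cons_val_one, Matrix.head_cons,
      Matrix.empty_val', Matrix.cons_val_fin_one, Matrix.head_fin_const]
    norm_num
    all_goals try ring_nf
    all_goals try simp [Complex.I_sq]
    all_goals try ring_nf
  · rw [rhoAD_eq, trace_Mm]
    push_cast [h32]
    simp only [pauli, wv, gv, Matrix.kroneckerMap_apply, Fintype.sum_prod_type, Fin.sum_univ_two,
      Prod.fst_zero, Prod.snd_zero, Prod.fst_one, Prod.snd_one, Prod.mk.injEq,
      Matrix.cons_val', Matrix.cons_val_zero, Matrix.cons_val_one, Matrix.head_cons,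
      Matrix.empty_val', Matrix.cons_val_fin_one, Matrix.head_fin_const]
    norm_num
    all_goals try ring_nf
    all_goals try simp [Complex.I_sq]
    all_goals try ring_nf
  · rw [rhoAD_eq, trace_Mm]
    push_cast [h32]
    simp only [pauli, wv, gv, Matrix.kroneckerMap_apply, Fintype.sum_prod_type, Fin.sum_univ_two,
      Prod.fst_zero, Prod.snd_zero, Prod.fst_one, Prod.snd_one, Prod.mk.injEq,
      Matrix.cons_val', Matrix.cons_val_zero, Matrix.cons_val_one, Matrix.head_cons,
      Matrix.empty_val', Matrix.cons_val_fin_one, Matrix.head_fin_const]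
    norm_num
    all_goals try ring_nf
    all_goals try simp [Complex.I_sq]
    all_goals try ring_nf
  · rw [rhoAD_eq, trace_Mm]
    simp only [pauli, wv, gv, Matrix.kroneckerMap_apply, Fintype.sum_prod_type, Fin.sum_univ_two,
      Prod.fst_zero, Prod.snd_zero, Prod.fst_one, Prod.snd_one, Prod.mk.injEq,
      Matrix.cons_val', Matrix.cons_val_zero, Matrix.cons_val_one, Matrix.head_cons,
      Matrix.empty_val', Matrix.cons_val_fin_one, Matrix.head_fin_const]
    norm_num
    rw [show ((Real.sqrt (1-γ) : ℝ) : ℂ)^6 = (((1-γ : ℝ) : ℂ))^3 by rw [← hS]; ring]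
    rw [hS, hT]
    push_cast
    ring
  · intro i j k n1 n2 n3 n4 n5
    fin_cases i <;> fin_cases j <;> fin_cases k <;>
      first
      | exact absurd rfl n1
      | exact absurd rfl n2
      | exact absurd rfl n3
      | exact absurd rfl n4
      | exact absurd rfl n5
      | (rw [rhoAD_eq, trace_Mm]
         simp only [Fin.mk_zero, Fin.mk_one, Fin.isValue, pauli, wv, gv,
           Matrix.kroneckerMap_apply, Fintype.sum_prod_type, Fin.sum_univ_two,
           Prod.fst_zero, Prod.snd_zero, Prod.fst_one, Prod.snd_one, Prod.mk.injEq,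
           Matrix.cons_val', Matrix.cons_val_zero, Matrix.cons_val_one, Matrix.head_cons,
           Matrix.empty_val', Matrix.cons_val_fin_one, Matrix.head_fin_const]
         norm_num
         all_goals (ring_nf; all_goals (simp [Complex.I_sq]; all_goals ring_nf)))
end
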